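/- Let M be an n×n matrix over the superboolean semiring that is nonsingular (i.e., its permanent equals 1). Then M has a row with exactly one entry equal to 1 and all other entries equal to 0 (an n-marker). -/

import Mathlib

/-- The superboolean semiring `SB = {0, 1, 1^ν}`. -/
inductive SB : Type
  | zero | one | nu
deriving DecidableEq

instance instFintypeSB : Fintype SB where
  elems := ⟨↑[SB.zero, SB.one, SB.nu], by decide⟩
  complete := by intro x; cases x <;> decide

namespace SB

def add : SB → SB → SB
  | zero, x => x
  | x, zero => x
  | _, _ => nu

def mul : SB → SB → SB
  | zero, _ => zero
  | _, zero => zero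
  | one, x => x
  | x, one => x
  | nu, nu => nu

instance : Zero SB := ⟨zero⟩
instance : One SB := ⟨one⟩
instance : Add SB := ⟨add⟩
instance : Mul SB := ⟨mul⟩

instance : CommSemiring SB where
  add_assoc := by decide
  zero_add := by decide
  add_zero := by decide
  add_comm := by decide
  mul_assoc := by decide
  one_mul := by decide
  mul_one := by decide
  zero_mul := by decide
  mul_zero := by decide
  left_distrib := by decide
  right_distrib := by decide
  mul_comm := by decide
  nsmul := nsmulRec

end SB

namespace SBAux

instance : NoZeroDivisors SB := ⟨by intro a b h; revert h; revert a b; decide⟩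
instance : Nontrivial SB := ⟨⟨0, 1, by decide⟩⟩

lemma add_eq_one {a b : SB} (h : a + b = 1) : (a = 1 ∧ b = 0) ∨ (a = 0 ∧ b = 1) := by
  revert h; revert a b; decide

lemma mul_eq_one {a b : SB} (h : a * b = 1) : a = 1 ∧ b = 1 := by
  revert h; revert a b; decide

lemma sum_eq_zero {α : Type*} {s : Finset α} {f : α → SB}
    (h : ∑ x ∈ s, f x = 0) : ∀ a ∈ s, f a = 0 := by
  classical
  induction s using Finset.induction_on with
  | empty => simp
  | insert _ _ hx ih =>
    rename_i a s
    rw [Finset.sum_insert hx] at h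
    have h2 : f a = 0 ∧ ∑ x ∈ s, f x = 0 := by
      revert h; generalize f a = u; generalize (∑ x ∈ s, f x) = v
      revert u v; decide
    intro b hb
    rcases Finset.mem_insert.mp hb with rfl | hb
    · exact h2.1
    · exact ih h2.2 b hb

lemma sum_eq_one {α : Type*} {s : Finset α} {f : α → SB}
    (h : ∑ x ∈ s, f x = 1) :
    ∃ a ∈ s, f a = 1 ∧ ∀ b ∈ s, b ≠ a → f b = 0 := by
  classical
  induction s using Finset.induction_on with
  | empty => simp at h
  | insert _ _ hx ih =>
    rename_i a s
    rw [Finset.sum_insert hx] at h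
    rcases add_eq_one h with ⟨h1, h2⟩ | ⟨h1, h2⟩
    · refine ⟨a, Finset.mem_insert_self a s, h1, ?_⟩
      intro b hb hba
      rcases Finset.mem_insert.mp hb with rfl | hb
      · exact absurd rfl hba
      · exact sum_eq_zero h2 b hb
    · obtain ⟨c, hc, hc1, hc0⟩ := ih h2
      refine ⟨c, Finset.mem_insert_of_mem hc, hc1, ?_⟩
      intro b hb hbc
      rcases Finset.mem_insert.mp hb with rfl | hb
      · exact h1
      · exact hc0 b hb hbc

lemma prod_eq_one {α : Type*} {s : Finset α} {f : α → SB}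
    (h : ∏ x ∈ s, f x = 1) : ∀ a ∈ s, f a = 1 := by
  classical
  induction s using Finset.induction_on with
  | empty => simp
  | insert _ _ hx ih =>
    rename_i a s
    rw [Finset.prod_insert hx] at h
    obtain ⟨h1, h2⟩ := mul_eq_one h
    intro b hb
    rcases Finset.mem_insert.mp hb with rfl | hb
    · exact h1
    · exact ih h2 b hb

end SBAux

open SBAux in
/-- If an `n × n` matrix over the superboolean semiring is nonsingular (its permanent,
`∑_{σ ∈ S_n} ∏_i m_{i,σ(i)}`, equals `1`), then it has an `n`-marker: a row with exactly
one entry equal to `1` and all other entries equal to `0`. -/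
theorem sb_nonsingular_has_marker (n : ℕ) (hn : 0 < n) (M : Matrix (Fin n) (Fin n) SB)
    (hM : ∑ σ : Equiv.Perm (Fin n), ∏ i : Fin n, M i (σ i) = 1) :
    ∃ i : Fin n, ∃ j : Fin n, M i j = 1 ∧ ∀ j' : Fin n, j' ≠ j → M i j' = 0 := by
  classical
  obtain ⟨σ, -, hσ1, hσ0⟩ := sum_eq_one hM
  have hrow : ∀ i, M i (σ i) = 1 := fun i => prod_eq_one hσ1 i (Finset.mem_univ i)
  by_contra hcon
  push_neg at hcon
  have hex : ∀ i, ∃ j, j ≠ σ i ∧ M i j ≠ 0 := fun i => hcon i (σ i) (hrow i)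
  choose g hgne hg0 using hex
  set f : Fin n → Fin n := fun i => σ.symm (g i) with hf
  have hfne : ∀ i, f i ≠ i := by
    intro i h
    apply hgne i
    have := congrArg σ h
    simpa [hf] using this
  set x0 : Fin n := ⟨0, hn⟩
  obtain ⟨k, m, hkm, heq⟩ : ∃ k m, k < m ∧ f^[k] x0 = f^[m] x0 := by
    obtain ⟨k, m, hne, heq⟩ := Finite.exists_ne_map_eq_of_infinite (fun t : ℕ => f^[t] x0)
    rcases hne.lt_or_gt with h | h
    · exact ⟨k, m, h, heq⟩
    · exact ⟨m, k, h, heq.symm⟩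
  set a := f^[k] x0 with ha
  set p := m - k with hp
  have hp0 : 0 < p := Nat.sub_pos_of_lt hkm
  have hpa : f^[p] a = a := by
    have h1 : f^[p] (f^[k] x0) = f^[m] x0 := by
      rw [← Function.iterate_add_apply]; congr 1; omega
    rw [ha, h1, ← heq]
  set S : Set (Fin n) := {i | ∃ t, f^[t] a = i} with hS
  have haS : a ∈ S := ⟨0, rfl⟩
  have hfS : ∀ i ∈ S, f i ∈ S := by
    rintro i ⟨t, rfl⟩
    exact ⟨t + 1, by rw [Function.iterate_succ_apply']⟩
  have hperiod : ∀ i ∈ S, f^[p] i = i := by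
    rintro i ⟨t, rfl⟩
    rw [← Function.iterate_add_apply, Nat.add_comm, Function.iterate_add_apply, hpa]
  have hinj : ∀ i ∈ S, ∀ j ∈ S, f i = f j → i = j := by
    intro i hi j hj h
    have key : ∀ c ∈ S, f^[p - 1] (f c) = c := by
      intro c hc
      have h1 : f^[p - 1] (f c) = f^[p] c := by
        rw [← Function.iterate_succ_apply]; congr 1; omega
      rw [h1, hperiod c hc]
    rw [← key i hi, ← key j hj, h]
  set F : Fin n → Fin n := fun i => if i ∈ S then f i else i with hF
  have hFinj : Function.Injective F := by
    intro i j h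
    by_cases hi : i ∈ S <;> by_cases hj : j ∈ S <;> simp only [hF, hi, hj, if_pos, if_neg,
      if_true, if_false] at h
    · exact hinj i hi j hj h
    · exact absurd (h ▸ hfS i hi) hj
    · exact absurd (h ▸ hfS j hj) hi
    · exact h
  have hFbij : Function.Bijective F := Finite.injective_iff_bijective.mp hFinj
  set τ : Equiv.Perm (Fin n) := Equiv.ofBijective F hFbij with hτ
  set π : Equiv.Perm (Fin n) := τ.trans σ with hπ
  have hπa : π a = σ (f a) := by
    simp [hπ, hτ, Equiv.ofBijective, hF, haS]
  have hπσ : π ≠ σ := by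
    intro h
    have h2 : σ (f a) = σ a := by rw [← hπa, h]
    exact hfne a (σ.injective h2)
  have h0 := hσ0 π (Finset.mem_univ π) hπσ
  have hne0 : ∏ i, M i (π i) ≠ 0 := by
    rw [Finset.prod_ne_zero_iff]
    intro i _
    have hπi : π i = if i ∈ S then σ (f i) else σ i := by
      by_cases hi : i ∈ S <;>
        simp [hπ, hτ, Equiv.ofBijective, hF, hi]
    by_cases hi : i ∈ S
    · rw [hπi, if_pos hi]
      have : σ (f i) = g i := by simp [hf]
      rw [this]
      exact hg0 i
    · rw [hπi, if_neg hi, hrow i]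
      decide
  exact hne0 h0
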